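/- For all n ≥ 1 and r ≥ 3, M_r(n) ≤ M_{r+1}(n+1), where M_r(n) is the maximum, over starting graphs G₀ ⊆ Kₙ, of the running time of the K_r-bootstrap percolation process. Specifically: if v is a new vertex joined to all vertices of Kₙ, then for any starting graph G₀ ⊆ Kₙ, the K_{r+1}-process on Kₙ ∨ v starting from G₀ ∨ v adds exactly the same edges at each step as the K_r-process on Kₙ starting from G₀, hence runs for exactly as many steps. -/

import Mathlib

/-- One step of the `K_r`-bootstrap process: an uninfected pair `{u,v}` becomes an edge
if there is an `r`-set containing `u` and `v` all of whose pairs, except possibly `{u,v}`,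
are already edges (i.e. adding `{u,v}` creates a new copy of `K_r` using `{u,v}`). -/
def krStep (r : ℕ) {V : Type*} (G : SimpleGraph V) : SimpleGraph V :=
  SimpleGraph.fromRel (fun u v => G.Adj u v ∨
    ∃ s : Finset V, u ∈ s ∧ v ∈ s ∧ s.card = r ∧
      ∀ a ∈ s, ∀ b ∈ s, a ≠ b → ¬(a = u ∧ b = v) → ¬(a = v ∧ b = u) → G.Adj a b)

/-- `maxRunTime r n` is `M_r(n)`: the maximum `t` such that some starting graph `G₀ ⊆ Kₙ`
satisfies `G_t ≠ G_{t-1}` in the `K_r`-bootstrap process. -/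
noncomputable def maxRunTime (r n : ℕ) : ℕ :=
  sSup {t : ℕ | ∃ G₀ : SimpleGraph (Fin n), (krStep r)^[t] G₀ ≠ (krStep r)^[t - 1] G₀}

/-- `cone G = G ∨ v`: a new vertex (`Fin.last n`) joined to all vertices of `G`. -/
def cone {n : ℕ} (G : SimpleGraph (Fin n)) : SimpleGraph (Fin (n + 1)) :=
  SimpleGraph.fromRel (fun u v =>
    u = Fin.last n ∨ v = Fin.last n ∨
      ∃ a b : Fin n, u = a.castSucc ∧ v = b.castSucc ∧ G.Adj a b)

lemma krStep_adj {r : ℕ} {V : Type*} (G : SimpleGraph V) (u v : V) :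
    (krStep r G).Adj u v ↔ u ≠ v ∧ (G.Adj u v ∨
      ∃ s : Finset V, u ∈ s ∧ v ∈ s ∧ s.card = r ∧
        ∀ a ∈ s, ∀ b ∈ s, a ≠ b → ¬(a = u ∧ b = v) → ¬(a = v ∧ b = u) → G.Adj a b) := by
  rw [krStep, SimpleGraph.fromRel_adj]
  refine and_congr_right fun _ => ⟨fun h => ?_, fun h => Or.inl h⟩
  rcases h with h | h
  · exact h
  · rcases h with h | ⟨s, hv, hu, hc, hs⟩
    · exact Or.inl h.symm
    · exact Or.inr ⟨s, hu, hv, hc, fun a ha b hb hab h1 h2 => hs a ha b hb hab h2 h1⟩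

lemma le_krStep (r : ℕ) {V : Type*} (G : SimpleGraph V) : G ≤ krStep r G := by
  intro u v h
  exact (krStep_adj G u v).2 ⟨h.ne, Or.inl h⟩

lemma cone_adj {n : ℕ} (G : SimpleGraph (Fin n)) (u w : Fin (n + 1)) :
    (cone G).Adj u w ↔ u ≠ w ∧ (u = Fin.last n ∨ w = Fin.last n ∨
      ∃ a b : Fin n, u = a.castSucc ∧ w = b.castSucc ∧ G.Adj a b) := by
  rw [cone, SimpleGraph.fromRel_adj]
  refine and_congr_right fun _ => ⟨fun h => ?_, fun h => Or.inl h⟩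
  rcases h with h | h
  · exact h
  · rcases h with h | h | ⟨a, b, hw, hu, hab⟩
    · exact Or.inr (Or.inl h)
    · exact Or.inl h
    · exact Or.inr (Or.inr ⟨b, a, hu, hw, hab.symm⟩)

lemma cone_adj_castSucc {n : ℕ} (G : SimpleGraph (Fin n)) (a b : Fin n) :
    (cone G).Adj a.castSucc b.castSucc ↔ G.Adj a b := by
  rw [cone_adj]
  constructor
  · rintro ⟨hne, h⟩
    rcases h with h | h | ⟨a', b', ha', hb', hab⟩
    · exact absurd h (Fin.castSucc_lt_last a).ne
    · exact absurd h (Fin.castSucc_lt_last b).ne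
    · rwa [Fin.castSucc_injective n ha', Fin.castSucc_injective n hb']
  · intro h
    exact ⟨fun hc => h.ne (Fin.castSucc_injective n hc), Or.inr (Or.inr ⟨a, b, rfl, rfl, h⟩)⟩

lemma cone_adj_last {n : ℕ} (G : SimpleGraph (Fin n)) {w : Fin (n + 1)}
    (h : w ≠ Fin.last n) : (cone G).Adj (Fin.last n) w :=
  (cone_adj G _ _).2 ⟨h.symm, Or.inl rfl⟩

lemma cone_injective {n : ℕ} : Function.Injective (cone (n := n)) := by
  intro G H h
  ext a b
  rw [← cone_adj_castSucc G a b, ← cone_adj_castSucc H a b, h]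

lemma krStep_cone {n r : ℕ} (hr : 3 ≤ r) (G : SimpleGraph (Fin n)) :
    krStep (r + 1) (cone G) = cone (krStep r G) := by
  have hlast : ∀ a : Fin n, a.castSucc ≠ Fin.last n := fun a => (Fin.castSucc_lt_last a).ne
  ext u w
  rcases eq_or_ne u (Fin.last n) with hu | hu
  · subst hu
    rcases eq_or_ne w (Fin.last n) with hw | hw
    · subst hw; simp
    · constructor
      · intro _; exact cone_adj_last _ hw
      · intro _; exact le_krStep _ _ (cone_adj_last G hw)
  · rcases eq_or_ne w (Fin.last n) with hw | hw
    · subst hw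
      constructor
      · intro _; exact (cone_adj_last _ hu).symm
      · intro _; exact le_krStep _ _ (cone_adj_last G hu).symm
    · obtain ⟨a, rfl⟩ := Fin.exists_castSucc_eq.2 hu
      obtain ⟨b, rfl⟩ := Fin.exists_castSucc_eq.2 hw
      rw [cone_adj_castSucc, krStep_adj, krStep_adj]
      constructor
      · rintro ⟨hne, h⟩
        have hab : a ≠ b := fun h' => hne (by rw [h'])
        refine ⟨hab, ?_⟩
        rcases h with h | ⟨S, huS, hwS, hScard, hS⟩
        · exact Or.inl ((cone_adj_castSucc G a b).1 h)
        · set t : Finset (Fin n) := Finset.univ.filter (fun x => x.castSucc ∈ S) with ht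
          have hmem : ∀ x : Fin n, x ∈ t ↔ x.castSucc ∈ S := by simp [ht]
          have hadj : ∀ x ∈ t, ∀ y ∈ t, x ≠ y → ¬(x = a ∧ y = b) → ¬(x = b ∧ y = a) →
              G.Adj x y := by
            intro x hx y hy hxy h1 h2
            have := hS _ ((hmem x).1 hx) _ ((hmem y).1 hy)
              (fun hc => hxy (Fin.castSucc_injective n hc))
              (fun hc => h1 ⟨Fin.castSucc_injective n hc.1, Fin.castSucc_injective n hc.2⟩)
              (fun hc => h2 ⟨Fin.castSucc_injective n hc.1, Fin.castSucc_injective n hc.2⟩)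
            exact (cone_adj_castSucc G x y).1 this
          by_cases hl : Fin.last n ∈ S
          · have himg : t.image Fin.castSucc = S.erase (Fin.last n) := by
              ext y
              simp only [Finset.mem_image, Finset.mem_erase]
              constructor
              · rintro ⟨x, hx, rfl⟩; exact ⟨hlast x, (hmem x).1 hx⟩
              · rintro ⟨hy, hyS⟩
                obtain ⟨x, rfl⟩ := Fin.exists_castSucc_eq.2 hy
                exact ⟨x, (hmem x).2 hyS, rfl⟩
            have hcard : t.card = r := by
              have h1 := Finset.card_image_of_injective t (Fin.castSucc_injective n)
              rw [himg, Finset.card_erase_of_mem hl, hScard] at h1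
              omega
            exact Or.inr ⟨t, (hmem a).2 huS, (hmem b).2 hwS, hcard, hadj⟩
          · have himg : t.image Fin.castSucc = S := by
              ext y
              simp only [Finset.mem_image]
              constructor
              · rintro ⟨x, hx, rfl⟩; exact (hmem x).1 hx
              · intro hyS
                have hy : y ≠ Fin.last n := fun h => hl (h ▸ hyS)
                obtain ⟨x, rfl⟩ := Fin.exists_castSucc_eq.2 hy
                exact ⟨x, (hmem x).2 hyS, rfl⟩
            have hcard : t.card = r + 1 := by
              have h1 := Finset.card_image_of_injective t (Fin.castSucc_injective n)
              rw [himg, hScard] at h1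
              omega
            have hne' : (t \ {a, b}).Nonempty := by
              rw [Finset.sdiff_nonempty]
              intro hsub
              have h1 := Finset.card_le_card hsub
              have h2 : ({a, b} : Finset (Fin n)).card ≤ 2 := by
                apply le_trans (Finset.card_insert_le _ _); simp
              omega
            obtain ⟨c, hc⟩ := hne'
            have hct : c ∈ t := (Finset.mem_sdiff.1 hc).1
            have hca : c ≠ a := fun h => (Finset.mem_sdiff.1 hc).2 (by simp [h])
            have hcb : c ≠ b := fun h => (Finset.mem_sdiff.1 hc).2 (by simp [h])
            refine Or.inr ⟨t.erase c, Finset.mem_erase.2 ⟨Ne.symm hca, (hmem a).2 huS⟩,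
              Finset.mem_erase.2 ⟨Ne.symm hcb, (hmem b).2 hwS⟩, ?_, ?_⟩
            · rw [Finset.card_erase_of_mem hct, hcard]; omega
            · intro x hx y hy
              exact hadj x (Finset.mem_of_mem_erase hx) y (Finset.mem_of_mem_erase hy)
      · rintro ⟨hab, h⟩
        have hne : a.castSucc ≠ b.castSucc := fun hc => hab (Fin.castSucc_injective n hc)
        refine ⟨hne, ?_⟩
        rcases h with h | ⟨s, has, hbs, hscard, hs⟩
        · exact Or.inl ((cone_adj_castSucc G a b).2 h)
        · refine Or.inr ⟨insert (Fin.last n) (s.image Fin.castSucc),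
            Finset.mem_insert_of_mem (Finset.mem_image_of_mem _ has),
            Finset.mem_insert_of_mem (Finset.mem_image_of_mem _ hbs), ?_, ?_⟩
          · rw [Finset.card_insert_of_notMem, Finset.card_image_of_injective _
              (Fin.castSucc_injective n), hscard]
            simp only [Finset.mem_image]
            rintro ⟨x, _, hx⟩
            exact hlast x hx
          · intro x hx y hy hxy h1 h2
            rcases Finset.mem_insert.1 hx with rfl | hx
            · exact cone_adj_last G (Ne.symm hxy)
            · rcases Finset.mem_insert.1 hy with rfl | hy
              · obtain ⟨p, _, rfl⟩ := Finset.mem_image.1 hx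
                exact (cone_adj_last G (hlast p)).symm
              · obtain ⟨p, hp, rfl⟩ := Finset.mem_image.1 hx
                obtain ⟨q, hq, rfl⟩ := Finset.mem_image.1 hy
                refine (cone_adj_castSucc G p q).2 (hs p hp q hq
                  (fun h => hxy (by rw [h])) ?_ ?_)
                · rintro ⟨rfl, rfl⟩; exact h1 ⟨rfl, rfl⟩
                · rintro ⟨rfl, rfl⟩; exact h2 ⟨rfl, rfl⟩

lemma iterate_krStep_cone {n r : ℕ} (hr : 3 ≤ r) (G₀ : SimpleGraph (Fin n)) (t : ℕ) :
    (krStep (r + 1))^[t] (cone G₀) = cone ((krStep r)^[t] G₀) := by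
  induction t with
  | zero => rfl
  | succ t ih =>
    rw [Function.iterate_succ_apply', Function.iterate_succ_apply', ih, krStep_cone hr]

lemma runTime_bdd (r m : ℕ) :
    BddAbove {t : ℕ | ∃ G₀ : SimpleGraph (Fin m), (krStep r)^[t] G₀ ≠ (krStep r)^[t - 1] G₀} := by
  refine ⟨Nat.card (Sym2 (Fin m)), fun t ht => ?_⟩
  obtain ⟨G, hG⟩ := ht
  rcases Nat.eq_zero_or_pos t with rfl | hp
  · simp at hG
  have chain : ∀ j < t, (krStep r)^[j + 1] G ≠ (krStep r)^[j] G := by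
    intro j hj heq
    have e1 : (krStep r)^[t] G = (krStep r)^[t - (j + 1)] ((krStep r)^[j + 1] G) := by
      rw [← Function.iterate_add_apply]; congr 1; omega
    have e2 : (krStep r)^[t - 1] G = (krStep r)^[t - (j + 1)] ((krStep r)^[j] G) := by
      rw [← Function.iterate_add_apply]; congr 1; omega
    exact hG (by rw [e1, e2, heq])
  have grow : ∀ j, j ≤ t → j ≤ ((krStep r)^[j] G).edgeSet.ncard := by
    intro j
    induction j with
    | zero => intro _; exact Nat.zero_le _
    | succ j ih =>
      intro hj
      have hle := ih (by omega)
      have hmono : (krStep r)^[j] G ≤ (krStep r)^[j + 1] G := by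
        rw [Function.iterate_succ_apply']; exact le_krStep r _
      have hlt : (krStep r)^[j] G < (krStep r)^[j + 1] G :=
        lt_of_le_of_ne hmono (Ne.symm (chain j (by omega)))
      have := Set.ncard_lt_ncard (SimpleGraph.edgeSet_ssubset_edgeSet.2 hlt) (Set.toFinite _)
      omega
  have h1 := grow t le_rfl
  have h2 : ((krStep r)^[t] G).edgeSet.ncard ≤ Nat.card (Sym2 (Fin m)) := by
    rw [← Set.ncard_univ]
    exact Set.ncard_le_ncard (Set.subset_univ _) Set.finite_univ
  omega

theorem stmt_5 (n r : ℕ) (hn : 1 ≤ n) (hr : 3 ≤ r) :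
    (∀ (G₀ : SimpleGraph (Fin n)) (t : ℕ),
        (krStep (r + 1))^[t] (cone G₀) = cone ((krStep r)^[t] G₀)) ∧
    maxRunTime r n ≤ maxRunTime (r + 1) (n + 1) := by
  refine ⟨fun G₀ t => iterate_krStep_cone hr G₀ t, ?_⟩
  rw [maxRunTime, maxRunTime]
  set A := {t : ℕ | ∃ G₀ : SimpleGraph (Fin n), (krStep r)^[t] G₀ ≠ (krStep r)^[t - 1] G₀} with hA
  set B := {t : ℕ | ∃ G₀ : SimpleGraph (Fin (n + 1)),
    (krStep (r + 1))^[t] G₀ ≠ (krStep (r + 1))^[t - 1] G₀} with hB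
  have hsub : A ⊆ B := by
    rintro t ⟨G₀, hG⟩
    refine ⟨cone G₀, ?_⟩
    rw [iterate_krStep_cone hr, iterate_krStep_cone hr]
    exact fun h => hG (cone_injective h)
  rcases Set.eq_empty_or_nonempty A with h | h
  · rw [h, csSup_empty]; exact Nat.zero_le _
  · exact csSup_le_csSup (runTime_bdd _ _) h hsub
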